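/- For the Bernoulli doubling map τ(z) = z² on the unit circle and observables ψ_k(z) = z^k with -N̄ ≤ k ≤ N̄, if the number of equidistant nodes satisfies M ≥ 3N/2 with N = 2N̄+1, then the EDMD matrix A = G H^{-1} has entries A_{kl} = δ_{2k,l}; in particular the only nonzero eigenvalue of A is 1 (with eigenvector corresponding to the constant observable), and all other eigenvalues of A vanish. -/

import Mathlib

open Complex Finset

lemma edmd_aux_sum (M : ℕ) (hM : 0 < M) (k : ℤ) :
    ∑ m ∈ Finset.range M, Complex.exp (2 * Real.pi * I * m / M) ^ k
      = if (M:ℤ) ∣ k then (M:ℂ) else 0 := by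
  have hM0 : (M:ℂ) ≠ 0 := Nat.cast_ne_zero.2 hM.ne'
  have h2pi : (2 * (Real.pi:ℂ) * I) ≠ 0 := by
    simp [Real.pi_ne_zero, Complex.I_ne_zero]
  have hterm : ∀ m ∈ Finset.range M,
      Complex.exp (2 * Real.pi * I * m / M) ^ k
        = Complex.exp (2 * Real.pi * I * k / M) ^ m := by
    intro m _
    rw [← Complex.exp_int_mul, ← Complex.exp_nat_mul]
    congr 1
    ring
  rw [Finset.sum_congr rfl hterm]
  have hωM : Complex.exp (2 * Real.pi * I * k / M) ^ M = 1 := by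
    rw [← Complex.exp_nat_mul]
    have h : (M:ℂ) * (2 * Real.pi * I * k / M) = k * (2 * Real.pi * I) := by
      field_simp
    rw [h, Complex.exp_int_mul_two_pi_mul_I]
  by_cases hdvd : (M:ℤ) ∣ k
  · obtain ⟨c, rfl⟩ := hdvd
    have hω : Complex.exp (2 * Real.pi * I * ((M:ℤ) * c) / M) = 1 := by
      rw [Complex.exp_eq_one_iff]
      exact ⟨c, by push_cast; field_simp⟩
    push_cast at hω ⊢
    simp [hω]
  · have hω1 : Complex.exp (2 * Real.pi * I * k / M) ≠ 1 := by
      intro h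
      rw [Complex.exp_eq_one_iff] at h
      obtain ⟨n, hn⟩ := h
      apply hdvd
      refine ⟨n, ?_⟩
      have hc : (2 * (Real.pi:ℂ) * I) * k = (2 * (Real.pi:ℂ) * I) * (n * M) := by
        field_simp at hn
        linear_combination (2 * (Real.pi:ℂ) * I) * hn
      have := mul_left_cancel₀ h2pi hc
      rw [mul_comm]
      exact_mod_cast this
    rw [geom_sum_eq hω1, hωM]
    simp [hdvd]

theorem edmd_A_doubling (Nb M : ℕ) (hM : 3 * (2 * Nb + 1) ≤ 2 * M)
    (τ : ℂ → ℂ) (hτ : ∀ z, τ z = z ^ 2)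
    (ψ : ℤ → ℂ → ℂ) (hψ : ∀ k z, ψ k z = z ^ k)
    (z : ℕ → ℂ) (hz : ∀ m, z m = Complex.exp (2 * Real.pi * I * m / M))
    (e : Fin (2 * Nb + 1) → ℤ) (he : ∀ i, e i = (i : ℤ) - Nb)
    (G H A : Matrix (Fin (2 * Nb + 1)) (Fin (2 * Nb + 1)) ℂ)
    (hG : ∀ i j, G i j =
      (M : ℂ)⁻¹ * ∑ m ∈ Finset.range M, ψ (e i) (τ (z m)) * ψ (e j) (z m))
    (hH : ∀ i j, H i j =
      (M : ℂ)⁻¹ * ∑ m ∈ Finset.range M, ψ (e i) (z m) * ψ (e j) (z m))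
    (hA : A = G * H⁻¹) :
    (∀ i j, A i j = if 2 * e i = e j then 1 else 0) ∧
    spectrum ℂ A ⊆ {0, 1} ∧
    A.mulVec (fun j => if e j = 0 then 1 else 0)
      = (fun j => if e j = 0 then 1 else 0) ∧
    (1 : ℂ) ∈ spectrum ℂ A := by
  have hMpos : 0 < M := by omega
  have hM3 : 3 * Nb + 2 ≤ M := by omega
  have hM0 : (M:ℂ) ≠ 0 := Nat.cast_ne_zero.2 hMpos.ne'
  have hz0 : ∀ m, z m ≠ 0 := fun m => by rw [hz]; exact Complex.exp_ne_zero _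
  have ebound : ∀ i : Fin (2*Nb+1), -(Nb:ℤ) ≤ e i ∧ e i ≤ Nb := by
    intro i
    have hi := i.isLt
    rw [he]
    omega
  have dvd_iff : ∀ k : ℤ, -(M:ℤ) < k → k < M → ((M:ℤ) ∣ k ↔ k = 0) := by
    intro k h1 h2
    constructor
    · intro hdvd
      by_contra h0
      have hle : (M:ℤ) ≤ |k| := Int.le_of_dvd (abs_pos.mpr h0) ((dvd_abs _ _).mpr hdvd)
      rcases abs_cases k with ⟨h, _⟩ | ⟨h, _⟩ <;> omega
    · rintro rfl; exact dvd_zero _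
  have key : ∀ k : ℤ, (M:ℂ)⁻¹ * ∑ m ∈ Finset.range M, z m ^ k
      = if (M:ℤ) ∣ k then 1 else 0 := by
    intro k
    have : ∀ m ∈ Finset.range M, z m ^ k
        = Complex.exp (2 * Real.pi * I * m / M) ^ k := by
      intro m _; rw [hz]
    rw [Finset.sum_congr rfl this, edmd_aux_sum M hMpos k]
    split_ifs <;> simp [hM0]
  -- entries of H
  have hH' : ∀ i j, H i j = if e i + e j = 0 then 1 else 0 := by
    intro i j
    have hterm : ∀ m ∈ Finset.range M, ψ (e i) (z m) * ψ (e j) (z m)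
        = z m ^ (e i + e j) := by
      intro m _
      rw [hψ, hψ, ← zpow_add₀ (hz0 m)]
    rw [hH, Finset.sum_congr rfl hterm, key]
    have h1 := ebound i
    have h2 := ebound j
    rw [if_congr (dvd_iff (e i + e j) (by omega) (by omega)) rfl rfl]
  -- entries of G
  have hG' : ∀ i j, G i j = if 2 * e i + e j = 0 then 1 else 0 := by
    intro i j
    have hterm : ∀ m ∈ Finset.range M, ψ (e i) (τ (z m)) * ψ (e j) (z m)
        = z m ^ (2 * e i + e j) := by
      intro m _
      rw [hψ, hψ, hτ, ← zpow_natCast (z m) 2, ← zpow_mul, ← zpow_add₀ (hz0 m)]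
      norm_num
    rw [hG, Finset.sum_congr rfl hterm, key]
    have h1 := ebound i
    have h2 := ebound j
    rw [if_congr (dvd_iff (2 * e i + e j) (by omega) (by omega)) rfl rfl]
  -- H is an involution
  have einj : ∀ i j : Fin (2*Nb+1), e i = e j → i = j := by
    intro i j hij
    rw [he, he] at hij
    exact Fin.ext (by omega)
  have hHH : H * H = 1 := by
    ext i j
    rw [Matrix.mul_apply, Matrix.one_apply]
    have hi := i.isLt
    set i' : Fin (2*Nb+1) := ⟨2*Nb - i.val, by omega⟩ with hi'
    have hei' : e i' = -(e i) := by
      rw [he, he, hi']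
      simp only []
      omega
    rw [Finset.sum_eq_single i' (fun b _ hb => ?_) (fun h => absurd (Finset.mem_univ i') h)]
    · rw [hH' i i', hei', hH' i' j, hei']
      simp only [add_neg_cancel, if_true, one_mul, neg_add_eq_zero]
      exact if_congr ⟨fun h => einj i j h, fun h => by rw [h]⟩ rfl rfl
    · rw [hH' i b, if_neg, zero_mul]
      intro hc
      apply hb
      apply einj
      rw [hei']
      omega
  have hHinv : H⁻¹ = H := Matrix.inv_eq_right_inv hHH
  -- entries of A
  have hA' : ∀ i j, A i j = if 2 * e i = e j then 1 else 0 := by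
    intro i j
    rw [hA, hHinv, Matrix.mul_apply]
    have hj := j.isLt
    set j' : Fin (2*Nb+1) := ⟨2*Nb - j.val, by omega⟩ with hj'
    have hej' : e j' = -(e j) := by
      rw [he, he, hj']
      simp only []
      omega
    rw [Finset.sum_eq_single j' (fun b _ hb => ?_) (fun h => absurd (Finset.mem_univ j') h)]
    · rw [hG' i j', hej', hH' j' j, hej']
      simp only [neg_add_cancel, if_true, mul_one]
      exact if_congr (by omega) rfl rfl
    · rw [hH' b j, if_neg, mul_zero]
      intro hc
      apply hb
      apply einj
      rw [hej']
      omega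
  -- the eigenvector fact
  have hvec : A.mulVec (fun j => if e j = 0 then 1 else 0)
      = (fun j => if e j = 0 then 1 else 0) := by
    funext i
    rw [Matrix.mulVec]
    show ∑ j, A i j * (if e j = 0 then 1 else 0) = _
    set j0 : Fin (2*Nb+1) := ⟨Nb, by omega⟩ with hj0
    have hej0 : e j0 = 0 := by rw [he, hj0]; simp
    rw [Finset.sum_eq_single j0 (fun b _ hb => ?_)
      (fun h => absurd (Finset.mem_univ j0) h)]
    · rw [hA' i j0, hej0, if_pos rfl, mul_one]
      exact if_congr (by omega) rfl rfl
    · rw [if_neg, mul_zero]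
      intro hc
      exact hb (einj b j0 (by rw [hej0, hc]))
  -- existence of indices
  have hall : ∀ t : ℤ, -(Nb:ℤ) ≤ t → t ≤ Nb → ∃ l : Fin (2*Nb+1), e l = t := by
    intro t h1 h2
    refine ⟨⟨(t + Nb).toNat, by omega⟩, ?_⟩
    rw [he]
    simp only []
    have : (((t + Nb).toNat : ℕ) : ℤ) = t + Nb := Int.toNat_of_nonneg (by omega)
    omega
  -- powers of A
  have hpow : ∀ p : ℕ, ∀ i j, (A^(p+1)) i j = if 2^(p+1) * e i = e j then 1 else 0 := by
    intro p
    induction p with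
    | zero => intro i j; rw [pow_one, hA']; norm_num
    | succ p ih =>
      intro i j
      rw [pow_succ, Matrix.mul_apply]
      by_cases hex : ∃ l0 : Fin (2*Nb+1), e l0 = 2^(p+1) * e i
      · obtain ⟨l0, hl0⟩ := hex
        rw [Finset.sum_eq_single l0 (fun b _ hb => ?_)
          (fun h => absurd (Finset.mem_univ l0) h)]
        · rw [ih i l0, if_pos hl0.symm, one_mul, hA' l0 j, hl0]
          exact if_congr (by rw [show (2:ℤ)^(p+1+1) = 2 * 2^(p+1) by ring, mul_assoc]) rfl rfl
        · rw [ih i b, if_neg, zero_mul]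
          intro hc
          exact hb (einj b l0 (by rw [hl0, hc]))
      · rw [Finset.sum_eq_zero (fun b _ => ?_), if_neg]
        · intro hc
          have hbig : (Nb:ℤ) < |2^(p+1) * e i| := by
            by_contra hle
            push_neg at hle
            rcases abs_le.mp hle with ⟨ha, hb⟩
            exact hex (hall _ ha hb)
          have hej := ebound j
          have h2 : 2 * (2^(p+1) * e i) = e j := by rw [← hc]; ring
          set c : ℤ := 2^(p+1) * e i with hcc
          rcases abs_cases c with ⟨ha, _⟩ | ⟨ha, _⟩ <;> omega
        · rw [ih i b, if_neg, zero_mul]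
          intro hc
          exact hex ⟨b, hc.symm⟩
  -- stabilization of powers
  have hzero : ∀ c : ℤ, (Nb:ℤ) < c → ∀ i j : Fin (2*Nb+1),
      (c * e i = e j ↔ e i = 0 ∧ e j = 0) := by
    intro c hcb i j
    have hi := ebound i
    have hj := ebound j
    constructor
    · intro h
      by_cases hk : e i = 0
      · exact ⟨hk, by rw [← h, hk, mul_zero]⟩
      · exfalso
        have h1 : (1:ℤ) ≤ |e i| := Int.one_le_abs hk
        have h2 : c ≤ |c * e i| := by
          rw [abs_mul, abs_of_pos (by omega : (0:ℤ) < c)]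
          nlinarith
        rw [h] at h2
        rcases abs_cases (e j) with ⟨ha, _⟩ | ⟨ha, _⟩ <;> omega
    · rintro ⟨h1, h2⟩
      rw [h1, h2, mul_zero]
  have h2p1 : (Nb:ℤ) < 2^(Nb+1) := by
    have : Nb < 2^(Nb+1) := (Nat.lt_two_pow_self (n := Nb)).trans_le
      (Nat.pow_le_pow_right (by norm_num) (by omega))
    exact_mod_cast this
  have h2p2 : (Nb:ℤ) < 2^(Nb+2) := by
    have : Nb < 2^(Nb+2) := (Nat.lt_two_pow_self (n := Nb)).trans_le
      (Nat.pow_le_pow_right (by norm_num) (by omega))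
    exact_mod_cast this
  have hstab : A^(Nb+2) = A^(Nb+1) := by
    ext i j
    rw [hpow (Nb+1) i j, hpow Nb i j,
      if_congr ((hzero _ h2p2 i j).trans (hzero _ h2p1 i j).symm) rfl rfl]
  haveI : Nonempty (Fin (2*Nb+1)) := ⟨⟨Nb, by omega⟩⟩
  refine ⟨hA', ?_, hvec, ?_⟩
  · -- spectrum ⊆ {0, 1}
    intro μ hμ
    have hmem := spectrum.subset_polynomial_aeval A
      (Polynomial.X^(Nb+2) - Polynomial.X^(Nb+1) : Polynomial ℂ) ⟨μ, hμ, rfl⟩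
    rw [map_sub, Polynomial.aeval_X_pow, Polynomial.aeval_X_pow, hstab, sub_self,
      spectrum.zero_eq] at hmem
    simp only [Set.mem_singleton_iff, Polynomial.eval_sub, Polynomial.eval_pow,
      Polynomial.eval_X] at hmem
    have hfac : μ^(Nb+1) * (μ - 1) = 0 := by linear_combination hmem
    simp only [Set.mem_insert_iff, Set.mem_singleton_iff]
    rcases mul_eq_zero.mp hfac with h | h
    · exact Or.inl (pow_eq_zero_iff (by omega) |>.mp h)
    · exact Or.inr (sub_eq_zero.mp h)
  · -- 1 is an eigenvalue
    rw [spectrum.mem_iff]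
    intro hu
    rw [map_one] at hu
    set v : Fin (2*Nb+1) → ℂ := fun j => if e j = 0 then 1 else 0 with hv
    have h0 : (1 - A).mulVec v = 0 := by
      rw [Matrix.sub_mulVec, Matrix.one_mulVec, hvec, sub_self]
    obtain ⟨u, hu_eq⟩ := hu
    have hBu : (↑u⁻¹ : Matrix _ _ ℂ) * (1 - A) = 1 := by
      rw [← hu_eq]
      exact u.inv_mul
    have hv0 : v = 0 := by
      calc v = (1 : Matrix _ _ ℂ).mulVec v := (Matrix.one_mulVec v).symm
        _ = ((↑u⁻¹ : Matrix _ _ ℂ) * (1 - A)).mulVec v := by rw [hBu]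
        _ = (↑u⁻¹ : Matrix _ _ ℂ).mulVec ((1 - A).mulVec v) :=
            (Matrix.mulVec_mulVec _ _ _).symm
        _ = 0 := by rw [h0, Matrix.mulVec_zero]
    have hj0 : e ⟨Nb, by omega⟩ = 0 := by rw [he]; simp
    have := congrFun hv0 ⟨Nb, by omega⟩
    rw [hv] at this
    simp only [hj0, if_pos rfl, Pi.zero_apply] at this
    exact one_ne_zero this
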